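/- Let $G = \begin{pmatrix} G_1 & G_3 \\ G_3^* & G_2 \end{pmatrix}$ be a self-adjoint operator (or finite-dimensional symmetric block matrix) on $E = E_+ \oplus E_-$, with $-G_2 > 0$ (positive definite) and $\lambda \ge 0$. Suppose $(\phi_+, \phi_-) \neq 0$ satisfies $G_1\phi_+ + G_3\phi_- = -\lambda\phi_+$ and $G_3^*\phi_+ + G_2\phi_- = \lambda\phi_-$. If moreover $I > G_3(-G_2)^{-2}G_3^*$ (i.e. $I - G_3(-G_2)^{-2}G_3^*$ is positive definite), then $\|\phi_+\|^2 - \|\phi_-\|^2 > 0$. In particular $\phi_+ \neq 0$. -/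

import Mathlib

open Matrix

/-- finite-dimensional version: for a symmetric block matrix
`G = [[G₁, G₃], [G₃ᵀ, G₂]]` with `-G₂ > 0` and `I - G₃(-G₂)⁻²G₃ᵀ > 0`, any nonzero
solution of `G₁φ₊ + G₃φ₋ = -λφ₊`, `G₃ᵀφ₊ + G₂φ₋ = λφ₋` with `λ ≥ 0` satisfies
`‖φ₊‖² - ‖φ₋‖² > 0`; in particular `φ₊ ≠ 0`. -/
theorem stmt_19 (p q : ℕ)
    (G₁ : Matrix (Fin p) (Fin p) ℝ) (hG₁ : G₁.IsSymm)
    (G₂ : Matrix (Fin q) (Fin q) ℝ) (hG₂ : G₂.IsSymm)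
    (G₃ : Matrix (Fin p) (Fin q) ℝ)
    (hG₂neg : Matrix.PosDef (-G₂))
    (hcontr : Matrix.PosDef ((1 : Matrix (Fin p) (Fin p) ℝ)
      - G₃ * ((-G₂)⁻¹ * (-G₂)⁻¹) * G₃ᵀ))
    (lam : ℝ) (hlam : 0 ≤ lam)
    (φp : Fin p → ℝ) (φm : Fin q → ℝ) (hne : ¬ (φp = 0 ∧ φm = 0))
    (heq1 : G₁.mulVec φp + G₃.mulVec φm = (-lam) • φp)
    (heq2 : G₃ᵀ.mulVec φp + G₂.mulVec φm = lam • φm) :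
    0 < φp ⬝ᵥ φp - φm ⬝ᵥ φm ∧ φp ≠ 0 := by
  set B : Matrix (Fin q) (Fin q) ℝ := -G₂ with hB
  have hBinv : Matrix.PosDef B⁻¹ := hG₂neg.inv
  have hBinvB : B⁻¹ * B = 1 := Matrix.nonsing_inv_mul B hG₂neg.det_pos.ne'.isUnit
  have hBT : Bᵀ = B := by
    simpa [hB, Matrix.transpose_neg] using congrArg Neg.neg hG₂.eq
  have hBinvSymm : (B⁻¹)ᵀ = B⁻¹ := by
    rw [Matrix.transpose_nonsing_inv, hBT]
  -- rewrite heq2: G₃ᵀ φp = lam • φm + B φm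
  have hw : G₃ᵀ.mulVec φp = lam • φm + B.mulVec φm := by
    have : G₂.mulVec φm = -(B.mulVec φm) := by
      simp [hB, Matrix.neg_mulVec]
    have h := heq2
    rw [this] at h
    have := congrArg (· + B.mulVec φm) h
    simpa [add_assoc] using this
  -- φp ≠ 0
  have hφp : φp ≠ 0 := by
    intro h0
    apply hne
    refine ⟨h0, ?_⟩
    by_contra hm
    have hAm : (lam • φm + B.mulVec φm) = 0 := by
      rw [← hw, h0]; simp
    have hpos : 0 < φm ⬝ᵥ (lam • φm + B.mulVec φm) := by
      have h1 : 0 ≤ lam * (φm ⬝ᵥ φm) :=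
        mul_nonneg hlam (Finset.sum_nonneg fun i _ => mul_self_nonneg _)
      have h2 : 0 < φm ⬝ᵥ B.mulVec φm := by
        simpa using hG₂neg.dotProduct_mulVec_pos hm
      calc 0 < lam * (φm ⬝ᵥ φm) + φm ⬝ᵥ B.mulVec φm := by linarith
        _ = φm ⬝ᵥ (lam • φm + B.mulVec φm) := by
          rw [dotProduct_add, dotProduct_smul]; rfl
    rw [hAm] at hpos
    simp at hpos
  -- key : φm ⬝ φm ≤ u ⬝ u where u = B⁻¹ (G₃ᵀ φp)
  set u : Fin q → ℝ := B⁻¹.mulVec (G₃ᵀ.mulVec φp) with hu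
  have huval : u = lam • B⁻¹.mulVec φm + φm := by
    rw [hu, hw, Matrix.mulVec_add, Matrix.mulVec_smul, Matrix.mulVec_mulVec,
      hBinvB, Matrix.one_mulVec]
  have hmono : φm ⬝ᵥ φm ≤ u ⬝ᵥ u := by
    rw [huval]
    have h1 : 0 ≤ φm ⬝ᵥ B⁻¹.mulVec φm := by
      rcases eq_or_ne φm 0 with h | h
      · simp [h]
      · exact le_of_lt (by simpa using hBinv.dotProduct_mulVec_pos h)
    have h2 : 0 ≤ (B⁻¹.mulVec φm) ⬝ᵥ (B⁻¹.mulVec φm) :=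
      Finset.sum_nonneg fun i _ => mul_self_nonneg _
    have hl2 : 0 ≤ lam * lam := mul_nonneg hlam hlam
    have hexp : (lam • B⁻¹.mulVec φm + φm) ⬝ᵥ (lam • B⁻¹.mulVec φm + φm)
        = φm ⬝ᵥ φm + 2 * lam * (φm ⬝ᵥ B⁻¹.mulVec φm)
          + lam * lam * ((B⁻¹.mulVec φm) ⬝ᵥ (B⁻¹.mulVec φm)) := by
      rw [dotProduct_add, add_dotProduct, add_dotProduct, smul_dotProduct,
        smul_dotProduct, dotProduct_smul, dotProduct_comm (B⁻¹.mulVec φm) φm]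
      simp [smul_eq_mul]
      ring
    rw [hexp]
    nlinarith [mul_nonneg hlam h1, mul_nonneg hl2 h2]
  -- u ⬝ u = φp ⬝ (G₃ B⁻² G₃ᵀ) φp
  have huu : u ⬝ᵥ u = φp ⬝ᵥ ((G₃ * (B⁻¹ * B⁻¹) * G₃ᵀ).mulVec φp) := by
    rw [hu, Matrix.mulVec_mulVec]
    rw [show G₃ * (B⁻¹ * B⁻¹) * G₃ᵀ = (B⁻¹ * G₃ᵀ)ᵀ * (B⁻¹ * G₃ᵀ) by
      simp only [Matrix.transpose_mul, hBinvSymm, Matrix.transpose_transpose,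
        Matrix.mul_assoc]]
    conv_rhs => rw [← Matrix.mulVec_mulVec]
    rw [Matrix.dotProduct_mulVec φp, Matrix.vecMul_transpose]
  -- contraction hypothesis applied to φp
  have hc := hcontr.dotProduct_mulVec_pos hφp
  have hc' : 0 < φp ⬝ᵥ φp - φp ⬝ᵥ ((G₃ * (B⁻¹ * B⁻¹) * G₃ᵀ).mulVec φp) := by
    simpa [Matrix.sub_mulVec, dotProduct_sub, Matrix.one_mulVec, hB] using hc
  refine ⟨?_, hφp⟩
  rw [← huu] at hc'
  linarith
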